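/- Every surjective group homomorphism from a finitely generated free group of rank n to a free group of rank n is an isomorphism (finitely generated free groups are Hopfian, stated for maps between two free groups of the same finite rank). -/

import Mathlib

/-- Extend a function injective on a finset to a permutation of a finite type. -/
lemma exists_perm_extend {α : Type*} [Fintype α] [DecidableEq α] (s : Finset α) (f : α → α)
    (hf : Set.InjOn f ↑s) : ∃ e : Equiv.Perm α, ∀ x ∈ s, e x = f x := by
  classical
  set t : Finset α := s.image f with ht
  have hcard : t.card = s.card := Finset.card_image_of_injOn hf
  have hF : Function.Injective (fun x : {x // x ∈ s} => (⟨f x.1, by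
      exact Finset.mem_image_of_mem f x.2⟩ : {y // y ∈ t})) := by
    rintro ⟨x, hx⟩ ⟨y, hy⟩ h
    have : f x = f y := congrArg Subtype.val h
    exact Subtype.ext (hf hx hy this)
  have hcard' : Fintype.card {x // x ∈ s} = Fintype.card {y // y ∈ t} := by
    simp [Fintype.card_coe, hcard]
  have hFbij : Function.Bijective (fun x : {x // x ∈ s} => (⟨f x.1, by
      exact Finset.mem_image_of_mem f x.2⟩ : {y // y ∈ t})) :=
    (Fintype.bijective_iff_injective_and_card _).2 ⟨hF, hcard'⟩
  let b : {x // x ∈ s} ≃ {y // y ∈ t} := Equiv.ofBijective _ hFbij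
  have hcc : Fintype.card {x // ¬ x ∈ s} = Fintype.card {y // ¬ y ∈ t} := by
    rw [Fintype.card_subtype_compl, Fintype.card_subtype_compl]
    simp [Fintype.card_coe, hcard]
  let c : {x // ¬ x ∈ s} ≃ {y // ¬ y ∈ t} := Fintype.equivOfCardEq hcc
  refine ⟨Equiv.subtypeCongr b c, fun x hx => ?_⟩
  have : (Equiv.subtypeCongr b c) x = (b ⟨x, hx⟩ : α) := by
    simp [Equiv.subtypeCongr, Equiv.sumCompl_symm_apply_of_pos hx]
  rw [this]
  rfl

section Perms

variable {n : ℕ}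

/-- A word with no adjacent cancelling pair. -/
def NiceWord (v : List (Fin n × Bool)) : Prop :=
  ∀ (i : ℕ) (x : Fin n) (b b' : Bool), v[i]? = some (x, b) → v[i+1]? = some (x, b') → b = b'

lemma niceWord_toWord (g : FreeGroup (Fin n)) : NiceWord g.toWord := by
  classical
  intro i x b b' h1 h2
  obtain ⟨hi1, e1⟩ := List.getElem?_eq_some_iff.mp h1
  obtain ⟨hi2, e2⟩ := List.getElem?_eq_some_iff.mp h2
  by_contra hbb
  have hb' : b' = !b := by cases b <;> cases b' <;> simp_all
  subst hb'
  have hsplit : g.toWord = g.toWord.take i ++ (x, b) :: (x, !b) :: g.toWord.drop (i + 2) := by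
    conv_lhs => rw [← List.take_append_drop i g.toWord]
    congr 1
    rw [List.drop_eq_getElem_cons hi1, List.drop_eq_getElem_cons hi2, e1, e2]
  have hwred : FreeGroup.reduce g.toWord = g.toWord := FreeGroup.reduce_toWord g
  rw [hsplit] at hwred
  exact FreeGroup.reduce.not hwred

lemma niceWord_map_neg {v : List (Fin n × Bool)} (h : NiceWord v) :
    NiceWord (v.map fun p => (p.1, !p.2)) := by
  intro i x b b' h1 h2
  rw [List.getElem?_map] at h1 h2
  obtain ⟨⟨y, c⟩, hy1, hy2⟩ := Option.map_eq_some_iff.mp h1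
  obtain ⟨⟨z, d⟩, hz1, hz2⟩ := Option.map_eq_some_iff.mp h2
  simp only [Prod.mk.injEq] at hy2 hz2
  have hzy : z = y := hz2.1.trans hy2.1.symm
  have hcd : c = d := h i y c d hy1 (by rw [← hzy]; exact hz1)
  rw [← hy2.2, ← hz2.2, hcd]

lemma niceWord_reverse_toWord (g : FreeGroup (Fin n)) : NiceWord g.toWord.reverse := by
  classical
  have h1 : NiceWord (g⁻¹.toWord.map fun p => (p.1, !p.2)) :=
    niceWord_map_neg (niceWord_toWord g⁻¹)
  have h2 : (g⁻¹.toWord.map fun p => (p.1, !p.2)) = g.toWord.reverse := by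
    rw [FreeGroup.toWord_inv, FreeGroup.invRev]
    rw [List.map_reverse, List.map_map]
    simp [Function.comp_def]
  rwa [h2] at h1

lemma exists_perms (v : List (Fin n × Bool)) (hred : NiceWord v) :
    ∃ e : Fin n → Equiv.Perm (Fin (v.length + 1)),
      (∀ (j : Fin n) (p : ℕ) (h : v[p]? = some (j, true)),
        e j ⟨p, by have := (List.getElem?_eq_some_iff.mp h).1; omega⟩
          = ⟨p + 1, by have := (List.getElem?_eq_some_iff.mp h).1; omega⟩) ∧
      (∀ (j : Fin n) (p : ℕ) (h : v[p]? = some (j, false)),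
        e j ⟨p + 1, by have := (List.getElem?_eq_some_iff.mp h).1; omega⟩
          = ⟨p, by have := (List.getElem?_eq_some_iff.mp h).1; omega⟩) := by
  classical
  have lt_of_up : ∀ (j : Fin n) (p : ℕ), v[p]? = some (j, true) → p < v.length := by
    intro j p h; exact (List.getElem?_eq_some_iff.mp h).1
  have lt_of_dn : ∀ (j : Fin n) (p : ℕ), v[p]? = some (j, false) → p < v.length := by
    intro j p h; exact (List.getElem?_eq_some_iff.mp h).1
  let fr : Fin n → Fin (v.length + 1) → Fin (v.length + 1) := fun j p =>
    if h : v[p.val]? = some (j, true) then ⟨p.val + 1, by have := lt_of_up j p.val h; omega⟩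
    else if 0 < p.val ∧ v[p.val - 1]? = some (j, false) then ⟨p.val - 1, by omega⟩
    else p
  let S : Fin n → Finset (Fin (v.length + 1)) := fun j =>
    Finset.univ.filter fun p =>
      v[p.val]? = some (j, true) ∨ (0 < p.val ∧ v[p.val - 1]? = some (j, false))
  have hinj : ∀ j : Fin n, Set.InjOn (fr j) (S j) := by
    intro j p hp q hq hpq
    simp only [S, Finset.coe_filter, Set.mem_setOf_eq, Finset.mem_univ, true_and] at hp hq
    have val_fr : ∀ (r : Fin (v.length+1)),
        (v[r.val]? = some (j, true) → (fr j r).val = r.val + 1) ∧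
        (¬ v[r.val]? = some (j, true) → (0 < r.val ∧ v[r.val - 1]? = some (j, false)) →
          (fr j r).val = r.val - 1) := by
      intro r
      constructor
      · intro h; simp only [fr, dif_pos h]
      · intro h h'; simp only [fr, dif_neg h, if_pos h']
    have key : ∀ (r : Fin (v.length+1)), (v[r.val]? = some (j, true) ∨
        (0 < r.val ∧ v[r.val - 1]? = some (j, false))) →
        (v[r.val]? = some (j, true) ∧ (fr j r).val = r.val + 1) ∨
        ((0 < r.val ∧ v[r.val - 1]? = some (j, false)) ∧ (fr j r).val = r.val - 1) := by
      intro r hr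
      by_cases h : v[r.val]? = some (j, true)
      · exact Or.inl ⟨h, (val_fr r).1 h⟩
      · rcases hr with h' | h'
        · exact absurd h' h
        · exact Or.inr ⟨h', (val_fr r).2 h h'⟩
    have hval : (fr j p).val = (fr j q).val := congrArg Fin.val hpq
    rcases key p hp with ⟨h1, e1⟩ | ⟨h1, e1⟩ <;> rcases key q hq with ⟨h2, e2⟩ | ⟨h2, e2⟩
    · apply Fin.ext; omega
    · exfalso
      have hq0 : 0 < q.val := h2.1
      have hpq' : q.val - 1 = p.val + 1 := by omega
      rw [hpq'] at h2
      have := hred p.val j true false h1 h2.2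
      simp at this
    · exfalso
      have hp0 : 0 < p.val := h1.1
      have hqp' : p.val - 1 = q.val + 1 := by omega
      rw [hqp'] at h1
      have := hred q.val j true false h2 h1.2
      simp at this
    · apply Fin.ext; omega
  choose e he using fun j => exists_perm_extend (S j) (fr j) (hinj j)
  refine ⟨e, ?_, ?_⟩
  · intro j p h
    have hpm : p < v.length := lt_of_up j p h
    have hmem : (⟨p, by omega⟩ : Fin (v.length+1)) ∈ S j := by
      simp only [S, Finset.mem_filter, Finset.mem_univ, true_and]
      exact Or.inl h
    rw [he j _ hmem]
    simp only [fr, dif_pos h]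
  · intro j p h
    have hpm : p < v.length := lt_of_dn j p h
    have hcond : 0 < ((⟨p + 1, by omega⟩ : Fin (v.length+1))).val ∧
        v[((⟨p + 1, by omega⟩ : Fin (v.length+1))).val - 1]? = some (j, false) := by
      simpa using h
    have hmem : (⟨p + 1, by omega⟩ : Fin (v.length+1)) ∈ S j := by
      simp only [S, Finset.mem_filter, Finset.mem_univ, true_and]
      exact Or.inr hcond
    rw [he j _ hmem]
    have hnot : ¬ v[p + 1]? = some (j, true) := by
      intro hcontra
      have := hred p j false true h hcontra
      simp at this
    simp only [fr, dif_neg hnot, if_pos hcond]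
    apply Fin.ext
    simp

end Perms

/-- Residual finiteness of finitely generated free groups, concretely: every nontrivial
element survives in some finite symmetric group. -/
lemma freeGroup_exists_finite_quotient {n : ℕ} (g : FreeGroup (Fin n)) (hg : g ≠ 1) :
    ∃ (m : ℕ) (ψ : FreeGroup (Fin n) →* Equiv.Perm (Fin (m + 1))), ψ g ≠ 1 := by
  classical
  obtain ⟨e, heUp, heDn⟩ := exists_perms g.toWord.reverse (niceWord_reverse_toWord g)
  refine ⟨g.toWord.reverse.length, FreeGroup.lift e, ?_⟩
  have main : ∀ t : List (Fin n × Bool), t <:+ g.toWord.reverse.reverse →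
      ((FreeGroup.lift e (FreeGroup.mk t))
        (⟨0, by omega⟩ : Fin (g.toWord.reverse.length + 1))).val = t.length := by
    intro t
    induction t with
    | nil =>
      intro _
      have : FreeGroup.mk ([] : List (Fin n × Bool)) = 1 := rfl
      rw [this]
      simp
    | cons hd t ih =>
      intro ht
      obtain ⟨j, b⟩ := hd
      have ht' : t <:+ g.toWord.reverse.reverse := (List.suffix_cons (j, b) t).trans ht
      have hlt : t.length < g.toWord.reverse.length := by
        have := ht.length_le
        simp only [List.length_cons, List.length_reverse] at this ⊢
        omega
      have hletter : g.toWord.reverse[t.length]? = some (j, b) := by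
        have hpre : ((j, b) :: t).reverse <+: g.toWord.reverse := by
          rw [← List.reverse_reverse g.toWord.reverse]
          exact List.reverse_prefix.mpr ht
        obtain ⟨r, hr⟩ := hpre
        rw [← hr, List.reverse_cons]
        rw [List.getElem?_append_left (by simp)]
        rw [List.getElem?_append_right (by simp)]
        simp
      have hsplit : FreeGroup.mk ((j, b) :: t) = FreeGroup.mk [(j, b)] * FreeGroup.mk t := by
        rw [FreeGroup.mul_mk]; rfl
      rw [hsplit, map_mul, Equiv.Perm.mul_apply]
      have hx : (FreeGroup.lift e (FreeGroup.mk t))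
          (⟨0, by omega⟩ : Fin (g.toWord.reverse.length + 1)) = ⟨t.length, by omega⟩ := by
        apply Fin.ext
        simpa using ih ht'
      rw [hx]
      cases b with
      | true =>
        have h1 : FreeGroup.mk [(j, true)] = FreeGroup.of j := rfl
        rw [h1, FreeGroup.lift_apply_of]
        rw [heUp j t.length hletter]
        simp
      | false =>
        have h1 : FreeGroup.mk [(j, false)] = (FreeGroup.of j)⁻¹ := by
          have h2 : (FreeGroup.of j : FreeGroup (Fin n))⁻¹
              = FreeGroup.mk (FreeGroup.invRev [(j, true)]) := FreeGroup.inv_mk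
          rw [h2]
          rfl
        rw [h1, map_inv, FreeGroup.lift_apply_of]
        have h2 := heDn j t.length hletter
        have h3 : (e j)⁻¹ (⟨t.length, by omega⟩ : Fin (g.toWord.reverse.length + 1))
            = ⟨t.length + 1, by omega⟩ := by
          rw [← h2, Equiv.Perm.inv_def, Equiv.symm_apply_apply]
        rw [h3]
        simp
  have hmain := main g.toWord (by rw [List.reverse_reverse])
  have hgw : FreeGroup.mk g.toWord = g := FreeGroup.mk_toWord
  rw [hgw] at hmain
  have hm0 : g.toWord.length ≠ 0 := by
    intro h0
    exact hg (FreeGroup.toWord_eq_nil_iff.mp (List.length_eq_zero_iff.mp h0))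
  intro hone
  rw [hone] at hmain
  simp only [Equiv.Perm.one_apply] at hmain
  omega

/-- Every surjective homomorphism between finitely generated free groups of the same
finite rank `n` is injective (hence an isomorphism): the Hopfian property. -/
theorem stmt1 {n : ℕ} (φ : FreeGroup (Fin n) →* FreeGroup (Fin n))
    (hφ : Function.Surjective φ) : Function.Injective φ := by
  rw [injective_iff_map_eq_one]
  intro g hg1
  by_contra hg
  obtain ⟨m, ψ, hψ⟩ := freeGroup_exists_finite_quotient g hg
  haveI : Finite (FreeGroup (Fin n) →* Equiv.Perm (Fin (m + 1))) :=
    Finite.of_equiv _ (FreeGroup.lift : (Fin n → Equiv.Perm (Fin (m+1))) ≃ _)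
  have hT : Function.Injective
      (fun χ : FreeGroup (Fin n) →* Equiv.Perm (Fin (m + 1)) => χ.comp φ) := by
    intro χ₁ χ₂ h
    refine MonoidHom.ext fun x => ?_
    obtain ⟨y, rfl⟩ := hφ x
    exact DFunLike.congr_fun h y
  obtain ⟨χ, hχ⟩ := Finite.injective_iff_surjective.mp hT ψ
  apply hψ
  rw [← hχ]
  simp only [MonoidHom.comp_apply, hg1, map_one]
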